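/- arXiv:2102.09497 — 4 statements merged into one kernel-verified Lean document; each statement's English description precedes it below -/
import Mathlib

section
/- Let p ≥ 1 be an integer, d = p + 1, N > 0 and S > 0. Then for every y > 0 the improper integral ∫₀^y z⁻² e^{N/z} (e^{N/z} + S)^{−1/N − d} dz converges and (1 + pN) S^{1/N + p} ∫₀^y z⁻² e^{N/z} (e^{N/z} + S)^{−1/N − d} dz = ( (e^{N/y} + S) / S )^{−1/N − p}. -/
open MeasureTheory Set Filter Real Topology intervalIntegral

section aux

variable (p : ℕ) (N S : ℝ)

private noncomputable def auxf : ℝ → ℝ := fun z =>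
  (z ^ 2)⁻¹ * Real.exp (N / z) * (Real.exp (N / z) + S) ^ (-1 / N - ((p : ℝ) + 1))

private noncomputable def auxF : ℝ → ℝ := fun z =>
  (Real.exp (N / z) + S) ^ (-1 / N - (p : ℝ)) / (1 + (p : ℝ) * N)

private lemma aux_deriv (hN : 0 < N) (hS : 0 < S) {z : ℝ} (hz : 0 < z) :
    HasDerivAt (auxF p N S) (auxf p N S z) z := by
  have hz0 : z ≠ 0 := ne_of_gt hz
  have h1 : HasDerivAt (fun w : ℝ => N / w) (N * -(z ^ 2)⁻¹) z := by
    simpa [div_eq_mul_inv] using (hasDerivAt_inv hz0).const_mul N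
  have h2 := (h1.exp.add_const S)
  have hpos : Real.exp (N / z) + S ≠ 0 := by positivity
  have h3 : HasDerivAt (fun w : ℝ => (Real.exp (N / w) + S) ^ (-1 / N - (p : ℝ)))
      ((Real.exp (N / z) * (N * -(z ^ 2)⁻¹)) * (-1 / N - (p : ℝ)) *
        (Real.exp (N / z) + S) ^ (-1 / N - (p : ℝ) - 1)) z :=
    h2.rpow_const (Or.inl hpos)
  have h4 := h3.div_const (1 + (p : ℝ) * N)
  have he : -1 / N - (p : ℝ) - 1 = -1 / N - ((p : ℝ) + 1) := by ring
  rw [he] at h4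
  refine h4.congr_deriv ?_
  have hc : (1 : ℝ) + (p : ℝ) * N ≠ 0 := by positivity
  unfold auxf
  field_simp
  ring

private lemma aux_contOn (hN : 0 < N) (hS : 0 < S) {a b : ℝ} (ha : 0 < a) :
    ContinuousOn (auxf p N S) (Icc a b) := by
  intro z hz
  have hz0 : z ≠ 0 := (lt_of_lt_of_le ha hz.1).ne'
  have he : ContinuousAt (fun w : ℝ => Real.exp (N / w)) z :=
    Real.continuous_exp.continuousAt.comp (continuousAt_const.div continuousAt_id hz0)
  have hpos : Real.exp (N / z) + S ≠ 0 := by positivity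
  exact ((((continuousAt_id.pow 2).inv₀ (pow_ne_zero 2 hz0)).mul he).mul
    ((he.add continuousAt_const).rpow_const (Or.inl hpos))).continuousWithinAt

end aux

/-- Closed form of the soft-maximum conditional distribution function:
for `d = p + 1`, `N > 0`, `S > 0` and `y > 0`, the improper integral
`∫₀^y z⁻² e^{N/z} (e^{N/z} + S)^{−1/N−d} dz` converges and
`(1 + pN) S^{1/N+p}` times it equals `((e^{N/y} + S)/S)^{−1/N−p}`. -/
theorem stmt5 (p : ℕ) (hp : 1 ≤ p) (N S : ℝ) (hN : 0 < N) (hS : 0 < S)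
    (y : ℝ) (hy : 0 < y) :
    MeasureTheory.IntegrableOn
      (fun z : ℝ => (z ^ 2)⁻¹ * Real.exp (N / z) *
        (Real.exp (N / z) + S) ^ (-1 / N - ((p : ℝ) + 1)))
      (Set.Ioc 0 y) ∧
    (1 + (p : ℝ) * N) * S ^ (1 / N + (p : ℝ)) *
        (∫ z in Set.Ioc (0:ℝ) y, (z ^ 2)⁻¹ * Real.exp (N / z) *
          (Real.exp (N / z) + S) ^ (-1 / N - ((p : ℝ) + 1)))
      = ((Real.exp (N / y) + S) / S) ^ (-1 / N - (p : ℝ)) := by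
  have hfeq : (fun z : ℝ => (z ^ 2)⁻¹ * Real.exp (N / z) *
      (Real.exp (N / z) + S) ^ (-1 / N - ((p : ℝ) + 1))) = auxf p N S := rfl
  have hc : (0:ℝ) < 1 + (p : ℝ) * N := by positivity
  -- nonnegativity of f and F
  have hfnn : ∀ z : ℝ, 0 ≤ auxf p N S z := by
    intro z
    unfold auxf
    positivity
  have hFnn : ∀ z : ℝ, 0 ≤ auxF p N S z := by
    intro z
    unfold auxF
    positivity
  -- integrability on Ioc a y for 0 < a
  have hint : ∀ a : ℝ, 0 < a → IntegrableOn (auxf p N S) (Ioc a y) := by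
    intro a ha
    exact ((aux_contOn p N S hN hS ha).integrableOn_Icc).mono_set Ioc_subset_Icc_self
  -- FTC on [a, y]
  have hftc : ∀ a : ℝ, 0 < a → a ≤ y →
      (∫ z in Ioc a y, auxf p N S z) = auxF p N S y - auxF p N S a := by
    intro a ha hay
    rw [← intervalIntegral.integral_of_le hay]
    refine intervalIntegral.integral_eq_sub_of_hasDerivAt (fun x hx => ?_) ?_
    · rw [uIcc_of_le hay] at hx
      exact aux_deriv p N S hN hS (lt_of_lt_of_le ha hx.1)
    · rw [intervalIntegrable_iff_integrableOn_Ioc_of_le hay]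
      exact hint a ha
  -- the sequence a n = y / (n+1)
  have hseq : Tendsto (fun n : ℕ => y / ((n : ℝ) + 1)) atTop (𝓝 0) :=
    tendsto_const_nhds.div_atTop (tendsto_natCast_atTop_atTop.atTop_add tendsto_const_nhds)
  have hapos : ∀ n : ℕ, 0 < y / ((n : ℝ) + 1) := fun n => by positivity
  have haley : ∀ n : ℕ, y / ((n : ℝ) + 1) ≤ y := by
    intro n
    rw [div_le_iff₀ (by positivity)]
    nlinarith [Nat.cast_nonneg (α := ℝ) n]
  -- integrability on Ioc 0 y
  have hI : IntegrableOn (auxf p N S) (Ioc 0 y) := by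
    apply integrableOn_Ioc_of_intervalIntegral_norm_bounded_left
      (I := auxF p N S y) (a := fun n : ℕ => y / ((n : ℝ) + 1)) (l := atTop)
      (fun n => hint _ (hapos n)) hseq
    filter_upwards with n
    have h1 : (∫ z in Ioc (y / ((n:ℝ)+1)) y, ‖auxf p N S z‖)
        = ∫ z in Ioc (y / ((n:ℝ)+1)) y, auxf p N S z := by
      refine setIntegral_congr_fun measurableSet_Ioc (fun z _ => ?_)
      exact Real.norm_of_nonneg (hfnn z)
    rw [h1, hftc _ (hapos n) (haley n)]
    linarith [hFnn (y / ((n:ℝ)+1))]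
  constructor
  · rw [hfeq]; exact hI
  -- the value: improper FTC
  have hlim : Tendsto (auxF p N S) (𝓝[>] 0) (𝓝 0) := by
    have h1 : Tendsto (fun z : ℝ => N / z) (𝓝[>] 0) atTop := by
      simpa [div_eq_mul_inv] using tendsto_inv_nhdsGT_zero.const_mul_atTop hN
    have h2 : Tendsto (fun z : ℝ => Real.exp (N / z) + S) (𝓝[>] 0) atTop :=
      (Real.tendsto_exp_atTop.comp h1).atTop_add tendsto_const_nhds
    have h3 : Tendsto (fun x : ℝ => x ^ (-1 / N - (p : ℝ))) atTop (𝓝 0) := by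
      have : -1 / N - (p : ℝ) = -(1 / N + (p : ℝ)) := by ring
      rw [this]
      exact tendsto_rpow_neg_atTop (by positivity)
    have := (h3.comp h2).div_const (1 + (p : ℝ) * N)
    rw [zero_div] at this
    exact this
  have hval : (∫ z in Ioc (0:ℝ) y, auxf p N S z) = auxF p N S y := by
    rw [← intervalIntegral.integral_of_le hy.le]
    have := intervalIntegral.integral_eq_sub_of_hasDerivAt_of_tendsto hy
      (f := auxF p N S) (f' := auxf p N S)
      (fun x hx => aux_deriv p N S hN hS hx.1)
      (by rw [intervalIntegrable_iff_integrableOn_Ioc_of_le hy.le]; exact hI)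
      hlim ((aux_deriv p N S hN hS hy).continuousAt.continuousWithinAt)
    rw [this]; ring
  rw [hfeq, hval]
  unfold auxF
  have hSE : (0:ℝ) < Real.exp (N / y) + S := by positivity
  rw [Real.div_rpow hSE.le hS.le,
    show (-1 / N - (p:ℝ)) = -(1 / N + (p:ℝ)) by ring,
    Real.rpow_neg hS.le, div_inv_eq_mul]
  field_simp [hc.ne']
end

section
/- Let α ∈ (0,1), x > 0, y > 0 and q ∈ (0,1). Then the equation exp{−(x^{−1/α} + y^{−1/α})^α + 1/x} (x^{−1/α} + y^{−1/α})^{α−1} x^{1 − 1/α} = q holds if and only if the quantity u = (α/(1−α)) (x^{−1/α} + y^{−1/α})^α satisfies u e^u = (α/(1−α)) x⁻¹ e^{(α/(1−α)) x⁻¹} q^{α/(α−1)}. -/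
lemma log_eq_log_iff' {a b : ℝ} (ha : 0 < a) (hb : 0 < b) :
    a = b ↔ Real.log a = Real.log b :=
  ⟨fun h => by rw [h], fun h => Real.log_injOn_pos (Set.mem_Ioi.2 ha) (Set.mem_Ioi.2 hb) h⟩

/-- The conditional quantile equation of the logistic model,
`G_{Y|X}(y|x) = q`, holds iff `u = (α/(1−α)) (x^{−1/α}+y^{−1/α})^α` satisfies
the Lambert-type equation `u e^u = (α/(1−α)) x⁻¹ e^{(α/(1−α)) x⁻¹} q^{α/(α−1)}`. -/
theorem stmt9 (α x y q : ℝ) (hα : α ∈ Set.Ioo (0:ℝ) 1) (hx : 0 < x) (hy : 0 < y)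
    (hq : q ∈ Set.Ioo (0:ℝ) 1) :
    (Real.exp (-(x ^ (-1/α) + y ^ (-1/α)) ^ α + 1 / x) *
        (x ^ (-1/α) + y ^ (-1/α)) ^ (α - 1) * x ^ (1 - 1/α) = q)
    ↔ (α / (1 - α)) * (x ^ (-1/α) + y ^ (-1/α)) ^ α *
          Real.exp ((α / (1 - α)) * (x ^ (-1/α) + y ^ (-1/α)) ^ α)
        = (α / (1 - α)) * x⁻¹ * Real.exp ((α / (1 - α)) * x⁻¹) * q ^ (α / (α - 1)) := by
  obtain ⟨hα0, hα1⟩ := hα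
  obtain ⟨hq0, hq1⟩ := hq
  have h1α : (0:ℝ) < 1 - α := by linarith
  have hS : 0 < x ^ (-1/α) + y ^ (-1/α) :=
    add_pos (Real.rpow_pos_of_pos hx _) (Real.rpow_pos_of_pos hy _)
  have hA : 0 < (x ^ (-1/α) + y ^ (-1/α)) ^ α := Real.rpow_pos_of_pos hS α
  have hc : 0 < α / (1 - α) := div_pos hα0 h1α
  have hL : 0 < Real.exp (-(x ^ (-1/α) + y ^ (-1/α)) ^ α + 1 / x) *
      (x ^ (-1/α) + y ^ (-1/α)) ^ (α - 1) * x ^ (1 - 1/α) := by positivity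
  have hR1 : 0 < (α / (1 - α)) * (x ^ (-1/α) + y ^ (-1/α)) ^ α *
      Real.exp ((α / (1 - α)) * (x ^ (-1/α) + y ^ (-1/α)) ^ α) := by positivity
  have hR2 : 0 < (α / (1 - α)) * x⁻¹ * Real.exp ((α / (1 - α)) * x⁻¹) * q ^ (α / (α - 1)) := by
    positivity
  rw [log_eq_log_iff' hL hq0, log_eq_log_iff' hR1 hR2]
  rw [Real.log_mul (by positivity) (by positivity), Real.log_mul (by positivity) (by positivity),
    Real.log_mul (by positivity) (by positivity), Real.log_mul (by positivity) (by positivity),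
    Real.log_mul (by positivity) (by positivity), Real.log_mul (by positivity) (by positivity),
    Real.log_mul (by positivity) (by positivity),
    Real.log_exp, Real.log_exp, Real.log_exp,
    Real.log_rpow hS, Real.log_rpow hx, Real.log_rpow hS, Real.log_rpow hq0, Real.log_inv]
  set A := Real.log (x ^ (-1/α) + y ^ (-1/α)) with hA'
  set B := (x ^ (-1/α) + y ^ (-1/α)) ^ α with hB'
  set LX := Real.log x
  set LQ := Real.log q
  set LC := Real.log (α / (1 - α))
  have hαne : α ≠ 0 := ne_of_gt hα0
  have hα1ne : α - 1 ≠ 0 := by linarith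
  have h1αne : (1:ℝ) - α ≠ 0 := ne_of_gt h1α
  constructor
  · intro h
    linear_combination (norm := (field_simp; ring)) (α / (α - 1)) * h
  · intro h
    linear_combination (norm := (field_simp; ring)) ((α - 1) / α) * h
end

section
/- Let α ∈ (0,1), q ∈ (0,1), and suppose y : (0,∞) → (0,∞) satisfies, for every x > 0, the conditional quantile equation exp{−(x^{−1/α} + y(x)^{−1/α})^α + 1/x} (x^{−1/α} + y(x)^{−1/α})^{α−1} x^{1 − 1/α} = q. Then lim_{x→∞} y(x)/x = (q^{−1/(1−α)} − 1)^{−α}. -/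
/-- Asymptotic slope of the logistic regression lines: if `y(x)` solves the
conditional quantile equation `G_{Y|X}(y(x)|x) = q` of the logistic model for
every `x > 0`, then `y(x)/x → (q^{−1/(1−α)} − 1)^{−α}` as `x → ∞`. -/
theorem stmt11 (α q : ℝ) (hα : α ∈ Set.Ioo (0:ℝ) 1) (hq : q ∈ Set.Ioo (0:ℝ) 1)
    (y : ℝ → ℝ) (hypos : ∀ x : ℝ, 0 < x → 0 < y x)
    (heq : ∀ x : ℝ, 0 < x →
      Real.exp (-(x ^ (-1/α) + (y x) ^ (-1/α)) ^ α + 1 / x) *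
        (x ^ (-1/α) + (y x) ^ (-1/α)) ^ (α - 1) * x ^ (1 - 1/α) = q) :
    Filter.Tendsto (fun x => y x / x) Filter.atTop
      (nhds ((q ^ (-1 / (1 - α)) - 1) ^ (-α))) := by
  obtain ⟨ha0, ha1⟩ := hα
  obtain ⟨hq0, hq1⟩ := hq
  have ha0' : α ≠ 0 := ha0.ne'
  have ha1' : α - 1 ≠ 0 := by linarith
  have haneg : α - 1 < 0 := by linarith
  set s : ℝ → ℝ := fun x => 1 + (y x / x) ^ (-1/α) with hs
  have hs1 : ∀ x : ℝ, 0 < x → 1 < s x := by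
    intro x hx
    have hr : 0 < y x / x := div_pos (hypos x hx) hx
    have := Real.rpow_pos_of_pos hr (-1/α)
    simp only [hs]; linarith
  -- simplified equation
  have key : ∀ x : ℝ, 0 < x → Real.exp ((1 - s x ^ α) / x) * s x ^ (α - 1) = q := by
    intro x hx
    have hr : 0 < y x / x := div_pos (hypos x hx) hx
    have hspos : 0 < s x := lt_trans one_pos (hs1 x hx)
    have hxp : (0:ℝ) < x ^ (-1/α) := Real.rpow_pos_of_pos hx _
    have hyx : y x = x * (y x / x) := by field_simp
    have hsum : x ^ (-1/α) + (y x) ^ (-1/α) = x ^ (-1/α) * s x := by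
      rw [hyx, Real.mul_rpow hx.le hr.le]
      simp only [hs]; ring
    have e1 : (x ^ (-1/α) * s x) ^ α = x⁻¹ * s x ^ α := by
      rw [Real.mul_rpow hxp.le hspos.le, ← Real.rpow_mul hx.le,
        show -1/α * α = -1 by field_simp, Real.rpow_neg_one]
    have e2 : (x ^ (-1/α) * s x) ^ (α - 1) = x ^ (-1/α * (α-1)) * s x ^ (α - 1) := by
      rw [Real.mul_rpow hxp.le hspos.le, ← Real.rpow_mul hx.le]
    have e3 : x ^ (-1/α * (α-1)) * x ^ (1 - 1/α) = 1 := by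
      rw [← Real.rpow_add hx, show -1/α * (α-1) + (1 - 1/α) = 0 by field_simp; ring,
        Real.rpow_zero]
    have := heq x hx
    rw [hsum, e1, e2] at this
    calc Real.exp ((1 - s x ^ α) / x) * s x ^ (α - 1)
        = Real.exp (-(x⁻¹ * s x ^ α) + 1/x) * (x ^ (-1/α * (α-1)) * s x ^ (α - 1)) *
            x ^ (1 - 1/α) := by
          rw [show (1 - s x ^ α) / x = -(x⁻¹ * s x ^ α) + 1/x by field_simp; ring]
          have : Real.exp (-(x⁻¹ * s x ^ α) + 1/x) * (x ^ (-1/α * (α-1)) * s x ^ (α - 1)) *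
              x ^ (1 - 1/α) = Real.exp (-(x⁻¹ * s x ^ α) + 1/x) * s x ^ (α - 1) *
              (x ^ (-1/α * (α-1)) * x ^ (1 - 1/α)) := by ring
          rw [this, e3, mul_one]
      _ = q := this
  set S : ℝ := q ^ (1/(α-1)) with hSdef
  have hneg : 1/(α-1) < 0 := by
    apply div_neg_of_pos_of_neg one_pos haneg
  have hS1 : 1 < S := (Real.one_lt_rpow_iff_of_pos hq0).mpr (Or.inr ⟨hq1, hneg⟩)
  have hSpos : 0 < S := lt_trans one_pos hS1
  have hSq : S ^ (α - 1) = q := by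
    rw [hSdef, ← Real.rpow_mul hq0.le, one_div, inv_mul_cancel₀ ha1', Real.rpow_one]
  -- bounds
  have hge : ∀ x : ℝ, 0 < x → q ≤ s x ^ (α - 1) := by
    intro x hx
    have hsa : 1 ≤ s x ^ α := by
      calc (1:ℝ) = 1 ^ α := (Real.one_rpow α).symm
        _ ≤ s x ^ α := Real.rpow_le_rpow zero_le_one (hs1 x hx).le ha0.le
    have hexp : Real.exp ((1 - s x ^ α) / x) ≤ 1 := by
      rw [Real.exp_le_one_iff]
      exact div_nonpos_of_nonpos_of_nonneg (by linarith) hx.le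
    have hpow : 0 ≤ s x ^ (α - 1) :=
      (Real.rpow_pos_of_pos (lt_trans one_pos (hs1 x hx)) _).le
    calc q = Real.exp ((1 - s x ^ α) / x) * s x ^ (α - 1) := (key x hx).symm
      _ ≤ 1 * s x ^ (α - 1) := mul_le_mul_of_nonneg_right hexp hpow
      _ = s x ^ (α - 1) := one_mul _
  have hle : ∀ x : ℝ, 0 < x → s x ≤ S := by
    intro x hx
    have hspos : 0 < s x := lt_trans one_pos (hs1 x hx)
    have : S ^ (α - 1) ≤ s x ^ (α - 1) := by rw [hSq]; exact hge x hx
    exact (Real.rpow_le_rpow_iff_of_neg hSpos hspos haneg).mp this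
  have hub : ∀ x : ℝ, 0 < x → s x ^ (α - 1) ≤ q * Real.exp ((S ^ α - 1) / x) := by
    intro x hx
    have hspos : 0 < s x := lt_trans one_pos (hs1 x hx)
    have e := key x hx
    have hexpne : Real.exp ((1 - s x ^ α) / x) ≠ 0 := Real.exp_ne_zero _
    have e2 : s x ^ (α - 1) = q * Real.exp ((s x ^ α - 1) / x) := by
      rw [show (s x ^ α - 1) / x = -((1 - s x ^ α) / x) by ring, Real.exp_neg]
      field_simp
      linarith [e]
    rw [e2]
    have hsa : s x ^ α ≤ S ^ α := Real.rpow_le_rpow hspos.le (hle x hx) ha0.le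
    have : Real.exp ((s x ^ α - 1) / x) ≤ Real.exp ((S ^ α - 1) / x) := by
      apply Real.exp_le_exp.mpr
      gcongr
    exact mul_le_mul_of_nonneg_left this hq0.le
  -- squeeze: s x ^ (α-1) → q
  have hdiv : Filter.Tendsto (fun x : ℝ => (S ^ α - 1) / x) Filter.atTop (nhds 0) :=
    Filter.Tendsto.div_atTop tendsto_const_nhds Filter.tendsto_id
  have hupper : Filter.Tendsto (fun x : ℝ => q * Real.exp ((S ^ α - 1) / x))
      Filter.atTop (nhds q) := by
    have := ((Real.continuous_exp.tendsto 0).comp hdiv).const_mul q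
    simpa using this
  have htq : Filter.Tendsto (fun x => s x ^ (α - 1)) Filter.atTop (nhds q) := by
    apply tendsto_of_tendsto_of_tendsto_of_le_of_le' tendsto_const_nhds hupper
    · filter_upwards [Filter.eventually_gt_atTop 0] with x hx using hge x hx
    · filter_upwards [Filter.eventually_gt_atTop 0] with x hx using hub x hx
  -- s → S
  have hsS : Filter.Tendsto s Filter.atTop (nhds S) := by
    have hcont : ContinuousAt (fun t : ℝ => t ^ (1/(α-1))) q :=
      Real.continuousAt_rpow_const q _ (Or.inl hq0.ne')
    have h := hcont.tendsto.comp htq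
    apply h.congr'
    filter_upwards [Filter.eventually_gt_atTop 0] with x hx
    have hspos : 0 < s x := lt_trans one_pos (hs1 x hx)
    show (s x ^ (α - 1)) ^ (1/(α-1)) = s x
    rw [← Real.rpow_mul hspos.le, show (α-1) * (1/(α-1)) = 1 by field_simp,
      Real.rpow_one]
  -- conclude
  have hc2 : ContinuousAt (fun t : ℝ => (t - 1) ^ (-α)) S := by
    have h1 : ContinuousAt (fun t : ℝ => t - 1) S := by fun_prop
    exact h1.rpow_const (Or.inl (by linarith : S - 1 ≠ 0))
  have hfin := hc2.tendsto.comp hsS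
  have hlim : Filter.Tendsto (fun x => y x / x) Filter.atTop (nhds ((S - 1) ^ (-α))) := by
    apply hfin.congr'
    filter_upwards [Filter.eventually_gt_atTop 0] with x hx
    have hr : 0 < y x / x := div_pos (hypos x hx) hx
    show (s x - 1) ^ (-α) = y x / x
    have : s x - 1 = (y x / x) ^ (-1/α) := by simp [hs]
    rw [this, ← Real.rpow_mul hr.le, show -1/α * (-α) = 1 by field_simp,
      Real.rpow_one]
  have hEq : (q ^ (-1 / (1 - α)) - 1) ^ (-α) = (S - 1) ^ (-α) := by
    rw [hSdef, show (-1) / (1 - α) = 1/(α-1) by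
      rw [div_eq_div_iff (by linarith) ha1']; ring]
  rw [hEq]
  exact hlim
end

section
/- Let J ≥ 2 be an integer, and for each pair of positive integers (α₁, α₂) with α₁ + α₂ = J let π_{(α₁,α₂)} ≥ 0 be given. Let dir(w; a, b) = Γ(a+b)/(Γ(a)Γ(b)) w^{a−1}(1−w)^{b−1} for w ∈ (0,1) and Be(c; a, b) = ∫₀^c dir(t; a, b) dt, and set h(w) = Σ_{α₁+α₂=J} π_{(α₁,α₂)} dir(w; α₁, α₂). Then for all x, y > 0, writing ω = x/(x+y): (i) 2 ∫₀¹ max(w/x, (1−w)/y) h(w) dw = (2/J) Σ_{α₁+α₂=J} π_{(α₁,α₂)} [ α₁ x⁻¹ {1 − Be(ω; α₁+1, α₂)} + α₂ y⁻¹ Be(ω; α₁, α₂+1) ]; and (ii) 2 ∫_ω^1 w h(w) dw = (2/J) Σ_{α₁+α₂=J} π_{(α₁,α₂)} α₁ {1 − Be(ω; α₁+1, α₂)}. -/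
open intervalIntegral MeasureTheory

noncomputable def Dn (m n : ℕ) (t : ℝ) : ℝ :=
  ((m + n + 1).factorial : ℝ) / ((m.factorial : ℝ) * n.factorial) * (t ^ m * (1 - t) ^ n)

lemma Dn_cont (m n : ℕ) : Continuous (Dn m n) := by
  unfold Dn; fun_prop

lemma Dn_intble (m n : ℕ) (a b : ℝ) : IntervalIntegrable (Dn m n) MeasureTheory.volume a b :=
  (Dn_cont m n).intervalIntegrable a b

lemma betaNat (n m : ℕ) : ∫ t in (0:ℝ)..1, t ^ m * (1 - t) ^ n
    = ((m.factorial : ℝ) * n.factorial) / (m + n + 1).factorial := by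
  induction n generalizing m with
  | zero =>
    simp only [pow_zero, mul_one, integral_pow]
    rw [Nat.add_zero, Nat.factorial_succ]
    have hf : ((m.factorial : ℝ)) ≠ 0 := by positivity
    push_cast
    rw [zero_pow (by omega), sub_zero, one_pow]
    field_simp
    try ring
  | succ n ih =>
    have hu : ∀ t ∈ Set.uIcc (0:ℝ) 1, HasDerivAt (fun t : ℝ => (1 - t) ^ (n + 1))
        (-((n + 1 : ℝ) * (1 - t) ^ n)) t := by
      intro t _
      have := ((hasDerivAt_id t).const_sub 1).pow (n + 1)
      refine this.congr_deriv ?_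
      simp only [id_eq, Nat.add_sub_cancel]
      push_cast; ring
    have hv : ∀ t ∈ Set.uIcc (0:ℝ) 1, HasDerivAt (fun t : ℝ => t ^ (m + 1))
        ((m + 1 : ℝ) * t ^ m) t := by
      intro t _
      have := hasDerivAt_pow (m + 1) t
      refine this.congr_deriv ?_
      simp only [Nat.add_sub_cancel]
      push_cast; ring
    have hu' : IntervalIntegrable (fun t : ℝ => -((n + 1 : ℝ) * (1 - t) ^ n))
        MeasureTheory.volume 0 1 := (by fun_prop : Continuous _).intervalIntegrable 0 1
    have hv' : IntervalIntegrable (fun t : ℝ => (m + 1 : ℝ) * t ^ m)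
        MeasureTheory.volume 0 1 := (by fun_prop : Continuous _).intervalIntegrable 0 1
    have ibp := intervalIntegral.integral_mul_deriv_eq_deriv_mul hu hv hu' hv'
    simp only [one_pow, zero_pow (Nat.succ_ne_zero _), sub_zero, sub_self,
      zero_pow (Nat.succ_ne_zero m), mul_zero, zero_mul, sub_zero, zero_sub] at ibp
    have e1 : (∫ t in (0:ℝ)..1, (1 - t) ^ (n + 1) * ((m + 1 : ℝ) * t ^ m))
        = (m + 1 : ℝ) * ∫ t in (0:ℝ)..1, t ^ m * (1 - t) ^ (n + 1) := by
      rw [← intervalIntegral.integral_const_mul]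
      congr 1; funext t; ring
    have e2 : (∫ t in (0:ℝ)..1, -((n + 1 : ℝ) * (1 - t) ^ n) * t ^ (m + 1))
        = -((n + 1 : ℝ) * ∫ t in (0:ℝ)..1, t ^ (m + 1) * (1 - t) ^ n) := by
      rw [← intervalIntegral.integral_const_mul, ← intervalIntegral.integral_neg]
      congr 1; funext t; ring
    rw [e1, e2, ih (m + 1)] at ibp
    have hm1 : (0:ℝ) < m + 1 := by positivity
    have := ibp
    have key : (∫ t in (0:ℝ)..1, t ^ m * (1 - t) ^ (n + 1))
        = ((n + 1 : ℝ) / (m + 1)) * (((m + 1).factorial : ℝ) * n.factorial / (m + 1 + n + 1).factorial) := by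
      field_simp at ibp ⊢
      linarith [ibp]
    rw [key]
    have h1 : m + 1 + n + 1 = m + (n + 1) + 1 := by omega
    rw [h1, Nat.factorial_succ m, Nat.factorial_succ n]
    have hf1 : ((m + (n + 1) + 1).factorial : ℝ) ≠ 0 := by positivity
    have hf2 : ((m.factorial : ℝ)) ≠ 0 := by positivity
    have hf3 : ((n.factorial : ℝ)) ≠ 0 := by positivity
    push_cast
    field_simp

lemma Dn_int_one (m n : ℕ) : ∫ t in (0:ℝ)..1, Dn m n t = 1 := by
  unfold Dn
  rw [intervalIntegral.integral_const_mul, betaNat n m]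
  have h1 : ((m + n + 1).factorial : ℝ) ≠ 0 := by positivity
  have h2 : ((m.factorial : ℝ) * n.factorial) ≠ 0 := by positivity
  field_simp

lemma mul_Dn (m n : ℕ) (t : ℝ) :
    t * Dn m n t = ((m + 1 : ℝ) / (m + n + 2)) * Dn (m + 1) n t := by
  unfold Dn
  have e1 : (m + 1) + n + 1 = (m + n + 1) + 1 := by omega
  rw [e1, Nat.factorial_succ (m + n + 1), Nat.factorial_succ m]
  have h1 : ((m + n + 1).factorial : ℝ) ≠ 0 := by positivity
  have h2 : ((m.factorial : ℝ)) ≠ 0 := by positivity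
  have h3 : ((n.factorial : ℝ)) ≠ 0 := by positivity
  push_cast
  field_simp
  ring

lemma one_sub_mul_Dn (m n : ℕ) (t : ℝ) :
    (1 - t) * Dn m n t = ((n + 1 : ℝ) / (m + n + 2)) * Dn m (n + 1) t := by
  unfold Dn
  have e1 : m + (n + 1) + 1 = (m + n + 1) + 1 := by omega
  rw [e1, Nat.factorial_succ (m + n + 1), Nat.factorial_succ n]
  have h1 : ((m + n + 1).factorial : ℝ) ≠ 0 := by positivity
  have h2 : ((m.factorial : ℝ)) ≠ 0 := by positivity
  have h3 : ((n.factorial : ℝ)) ≠ 0 := by positivity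
  push_cast
  field_simp
  ring

lemma dir_eq (dir : ℝ → ℝ → ℝ → ℝ)
    (hdir : ∀ w a b : ℝ, dir w a b
      = Real.Gamma (a + b) / (Real.Gamma a * Real.Gamma b) * w ^ (a - 1) * (1 - w) ^ (b - 1))
    (m n : ℕ) (t : ℝ) : dir t ((m : ℝ) + 1) ((n : ℝ) + 1) = Dn m n t := by
  rw [hdir]
  have g1 : Real.Gamma ((m : ℝ) + 1) = m.factorial := Real.Gamma_nat_eq_factorial m
  have g2 : Real.Gamma ((n : ℝ) + 1) = n.factorial := Real.Gamma_nat_eq_factorial n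
  have g3 : Real.Gamma ((m : ℝ) + 1 + ((n : ℝ) + 1)) = (m + n + 1).factorial := by
    have e : (m : ℝ) + 1 + ((n : ℝ) + 1) = ((m + n + 1 : ℕ) : ℝ) + 1 := by push_cast; ring
    rw [e, Real.Gamma_nat_eq_factorial]
  rw [g1, g2, g3]
  have e1 : (m : ℝ) + 1 - 1 = ((m : ℕ) : ℝ) := by ring
  have e2 : (n : ℝ) + 1 - 1 = ((n : ℕ) : ℝ) := by ring
  rw [e1, e2, Real.rpow_natCast, Real.rpow_natCast]
  unfold Dn
  ring

/-- Closed-form identities for the Bernstein polynomial angular density: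
with `h(w) = Σ_{α₁+α₂=J} π_{(α₁,α₂)} dir(w; α₁, α₂)` (the pair `(α₁,α₂)` of
positive integers summing to `J` being indexed by `α₁ = i ∈ {1,…,J−1}`,
`α₂ = J − i`), the exponent-measure integral and the tail integral
`2∫_ω^1 w h(w) dw` are explicit mixtures of Beta distribution functions. -/
theorem stmt15 (J : ℕ) (hJ : 2 ≤ J) (pw : ℕ → ℝ)
    (hpw : ∀ i ∈ Finset.Icc 1 (J - 1), 0 ≤ pw i)
    (dir : ℝ → ℝ → ℝ → ℝ)
    (hdir : ∀ w a b : ℝ, dir w a b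
      = Real.Gamma (a + b) / (Real.Gamma a * Real.Gamma b) * w ^ (a - 1) * (1 - w) ^ (b - 1))
    (Be : ℝ → ℝ → ℝ → ℝ)
    (hBe : ∀ c a b : ℝ, Be c a b = ∫ t in (0:ℝ)..c, dir t a b)
    (h : ℝ → ℝ)
    (hh : ∀ w : ℝ, h w = ∑ i ∈ Finset.Icc 1 (J - 1), pw i * dir w (i : ℝ) ((J - i : ℕ) : ℝ)) :
    ∀ x y : ℝ, 0 < x → 0 < y →
      (2 * (∫ w in (0:ℝ)..1, max (w / x) ((1 - w) / y) * h w)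
        = 2 / (J : ℝ) * ∑ i ∈ Finset.Icc 1 (J - 1), pw i *
            ((i : ℝ) * x⁻¹ * (1 - Be (x / (x + y)) ((i : ℝ) + 1) ((J - i : ℕ) : ℝ))
              + ((J - i : ℕ) : ℝ) * y⁻¹ * Be (x / (x + y)) (i : ℝ) (((J - i : ℕ) : ℝ) + 1))) ∧
      (2 * (∫ w in (x / (x + y))..1, w * h w)
        = 2 / (J : ℝ) * ∑ i ∈ Finset.Icc 1 (J - 1), pw i * (i : ℝ) *
            (1 - Be (x / (x + y)) ((i : ℝ) + 1) ((J - i : ℕ) : ℝ))) := by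
  intro x y hx hy
  have hxy : (0:ℝ) < x + y := by linarith
  set om : ℝ := x / (x + y) with hom
  have hom0 : 0 ≤ om := by positivity
  have hom1 : om ≤ 1 := by
    rw [hom, div_le_one hxy]; linarith
  -- per-index facts
  have hmem : ∀ i ∈ Finset.Icc 1 (J - 1), 1 ≤ i ∧ i < J := by
    intro i hi
    rw [Finset.mem_Icc] at hi
    omega
  -- cast lemmas
  have ci : ∀ i, 1 ≤ i → i < J → ((i : ℕ) : ℝ) = ((i - 1 : ℕ) : ℝ) + 1 := by
    intro i h1 _; rw [Nat.cast_sub h1]; push_cast; ring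
  have cJi : ∀ i, 1 ≤ i → i < J → ((J - i : ℕ) : ℝ) = ((J - i - 1 : ℕ) : ℝ) + 1 := by
    intro i h1 h2
    rw [show J - i - 1 = (J - i) - 1 from rfl, Nat.cast_sub (by omega : 1 ≤ J - i)]
    push_cast; ring
  have cJ : ∀ i, 1 ≤ i → i < J →
      ((i - 1 : ℕ) : ℝ) + ((J - i - 1 : ℕ) : ℝ) + 2 = (J : ℝ) := by
    intro i h1 h2
    rw [show J - i - 1 = J - (i + 1) from by omega, Nat.cast_sub h1,
      Nat.cast_sub (by omega : i + 1 ≤ J)]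
    push_cast; ring
  -- dir in terms of Dn
  have hd1 : ∀ i, 1 ≤ i → i < J → ∀ t : ℝ,
      dir t ((i : ℕ) : ℝ) ((J - i : ℕ) : ℝ) = Dn (i - 1) (J - i - 1) t := by
    intro i h1 h2 t
    rw [ci i h1 h2, cJi i h1 h2]
    exact dir_eq dir hdir (i - 1) (J - i - 1) t
  have hd2 : ∀ i, 1 ≤ i → i < J → ∀ t : ℝ,
      dir t (((i : ℕ) : ℝ) + 1) ((J - i : ℕ) : ℝ) = Dn i (J - i - 1) t := by
    intro i h1 h2 t
    rw [cJi i h1 h2]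
    exact dir_eq dir hdir i (J - i - 1) t
  have hd3 : ∀ i, 1 ≤ i → i < J → ∀ t : ℝ,
      dir t ((i : ℕ) : ℝ) (((J - i : ℕ) : ℝ) + 1) = Dn (i - 1) (J - i) t := by
    intro i h1 h2 t
    rw [ci i h1 h2]
    exact dir_eq dir hdir (i - 1) (J - i) t
  -- Be identities
  have keyBe1 : ∀ i, 1 ≤ i → i < J →
      1 - Be om (((i : ℕ) : ℝ) + 1) ((J - i : ℕ) : ℝ)
        = ∫ w in om..1, Dn i (J - i - 1) w := by
    intro i h1 h2
    have hB : Be om (((i : ℕ) : ℝ) + 1) ((J - i : ℕ) : ℝ)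
        = ∫ w in (0:ℝ)..om, Dn i (J - i - 1) w := by
      rw [hBe]
      simp only [hd2 i h1 h2]
    have hadj := intervalIntegral.integral_add_adjacent_intervals
      (Dn_intble i (J - i - 1) 0 om) (Dn_intble i (J - i - 1) om 1)
    rw [Dn_int_one] at hadj
    rw [hB]; linarith
  have keyBe2 : ∀ i, 1 ≤ i → i < J →
      Be om ((i : ℕ) : ℝ) (((J - i : ℕ) : ℝ) + 1)
        = ∫ w in (0:ℝ)..om, Dn (i - 1) (J - i) w := by
    intro i h1 h2
    rw [hBe]
    simp only [hd3 i h1 h2]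
  -- pointwise multiplication identities
  have key1 : ∀ i, 1 ≤ i → i < J → ∀ w : ℝ,
      w * Dn (i - 1) (J - i - 1) w = ((i : ℝ) / J) * Dn i (J - i - 1) w := by
    intro i h1 h2 w
    rw [mul_Dn (i - 1) (J - i - 1) w, show (i - 1) + 1 = i from by omega,
      cJ i h1 h2, ← ci i h1 h2]
  have key2 : ∀ i, 1 ≤ i → i < J → ∀ w : ℝ,
      (1 - w) * Dn (i - 1) (J - i - 1) w
        = (((J - i : ℕ) : ℝ) / J) * Dn (i - 1) (J - i) w := by
    intro i h1 h2 w
    rw [one_sub_mul_Dn (i - 1) (J - i - 1) w, show (J - i - 1) + 1 = J - i from by omega,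
      cJ i h1 h2, ← cJi i h1 h2]
  -- the tail integral (part ii)
  have I2 : (∫ w in om..1, w * h w)
      = ∑ i ∈ Finset.Icc 1 (J - 1), pw i * (((i : ℝ) / J)
          * (1 - Be om (((i : ℕ) : ℝ) + 1) ((J - i : ℕ) : ℝ))) := by
    have hptw : ∀ w : ℝ, w * h w = ∑ i ∈ Finset.Icc 1 (J - 1),
        pw i * (((i : ℝ) / J) * Dn i (J - i - 1) w) := by
      intro w
      rw [hh, Finset.mul_sum]
      refine Finset.sum_congr rfl fun i hi => ?_
      obtain ⟨h1, h2⟩ := hmem i hi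
      rw [hd1 i h1 h2, mul_left_comm, key1 i h1 h2]
    rw [intervalIntegral.integral_congr (g := fun w => ∑ i ∈ Finset.Icc 1 (J - 1),
        pw i * (((i : ℝ) / J) * Dn i (J - i - 1) w)) (fun w _ => hptw w)]
    rw [intervalIntegral.integral_finset_sum (fun i _ =>
      ((Dn_intble i (J - i - 1) om 1).const_mul ((i : ℝ) / J)).const_mul (pw i))]
    refine Finset.sum_congr rfl fun i hi => ?_
    obtain ⟨h1, h2⟩ := hmem i hi
    rw [intervalIntegral.integral_const_mul, intervalIntegral.integral_const_mul,
      keyBe1 i h1 h2]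
  constructor
  · -- part (i)
    have hmax1 : ∀ w ∈ Set.uIcc (0:ℝ) om, max (w / x) ((1 - w) / y) = (1 - w) / y := by
      intro w hw
      rw [Set.uIcc_of_le hom0] at hw
      obtain ⟨_, hw2⟩ := hw
      have hwx : w * (x + y) ≤ x := by
        rw [← le_div_iff₀ hxy]; exact hw2
      refine max_eq_right ?_
      rw [div_le_div_iff₀ hx hy]
      nlinarith
    have hmax2 : ∀ w ∈ Set.uIcc om 1, max (w / x) ((1 - w) / y) = w / x := by
      intro w hw
      rw [Set.uIcc_of_le hom1] at hw
      obtain ⟨hw1, _⟩ := hw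
      have hwx : x ≤ w * (x + y) := by
        rw [← div_le_iff₀ hxy]; exact hw1
      refine max_eq_left ?_
      rw [div_le_div_iff₀ hy hx]
      nlinarith
    -- rewrite h inside
    have hfun : (fun w : ℝ => max (w / x) ((1 - w) / y) * h w)
        = fun w => max (w / x) ((1 - w) / y)
            * ∑ i ∈ Finset.Icc 1 (J - 1), pw i * Dn (i - 1) (J - i - 1) w := by
      funext w
      rw [hh]
      congr 1
      refine Finset.sum_congr rfl fun i hi => ?_
      obtain ⟨h1, h2⟩ := hmem i hi
      rw [hd1 i h1 h2]
    have hInt : ∀ a b : ℝ, IntervalIntegrable (fun w : ℝ => max (w / x) ((1 - w) / y)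
        * ∑ i ∈ Finset.Icc 1 (J - 1), pw i * Dn (i - 1) (J - i - 1) w)
        MeasureTheory.volume a b := by
      intro a b
      refine Continuous.intervalIntegrable ?_ a b
      refine Continuous.mul ?_ ?_
      · exact Continuous.max (by fun_prop) (by fun_prop)
      · exact continuous_finset_sum _ fun i _ => continuous_const.mul (Dn_cont _ _)
    rw [hfun]
    rw [← intervalIntegral.integral_add_adjacent_intervals (hInt 0 om) (hInt om 1)]
    -- left piece
    have IL : (∫ w in (0:ℝ)..om, max (w / x) ((1 - w) / y)
          * ∑ i ∈ Finset.Icc 1 (J - 1), pw i * Dn (i - 1) (J - i - 1) w)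
        = ∑ i ∈ Finset.Icc 1 (J - 1), pw i * (y⁻¹ * ((((J - i : ℕ) : ℝ) / J)
            * Be om ((i : ℕ) : ℝ) (((J - i : ℕ) : ℝ) + 1))) := by
      rw [intervalIntegral.integral_congr (g := fun w => ∑ i ∈ Finset.Icc 1 (J - 1),
          pw i * (y⁻¹ * ((((J - i : ℕ) : ℝ) / J) * Dn (i - 1) (J - i) w)))
        (fun w hw => ?_)]
      · rw [intervalIntegral.integral_finset_sum (fun i _ =>
          (((Dn_intble (i - 1) (J - i) 0 om).const_mul _).const_mul y⁻¹).const_mul (pw i))]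
        refine Finset.sum_congr rfl fun i hi => ?_
        obtain ⟨h1, h2⟩ := hmem i hi
        rw [intervalIntegral.integral_const_mul, intervalIntegral.integral_const_mul,
          intervalIntegral.integral_const_mul, keyBe2 i h1 h2]
      · rw [hmax1 w hw, Finset.mul_sum]
        refine Finset.sum_congr rfl fun i hi => ?_
        obtain ⟨h1, h2⟩ := hmem i hi
        have e : (1 - w) / y * (pw i * Dn (i - 1) (J - i - 1) w)
            = pw i * (y⁻¹ * ((1 - w) * Dn (i - 1) (J - i - 1) w)) := by
          field_simp
        rw [e, key2 i h1 h2]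
    -- right piece
    have IR : (∫ w in om..1, max (w / x) ((1 - w) / y)
          * ∑ i ∈ Finset.Icc 1 (J - 1), pw i * Dn (i - 1) (J - i - 1) w)
        = ∑ i ∈ Finset.Icc 1 (J - 1), pw i * (x⁻¹ * (((i : ℝ) / J)
            * (1 - Be om (((i : ℕ) : ℝ) + 1) ((J - i : ℕ) : ℝ)))) := by
      rw [intervalIntegral.integral_congr (g := fun w => ∑ i ∈ Finset.Icc 1 (J - 1),
          pw i * (x⁻¹ * (((i : ℝ) / J) * Dn i (J - i - 1) w)))
        (fun w hw => ?_)]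
      · rw [intervalIntegral.integral_finset_sum (fun i _ =>
          (((Dn_intble i (J - i - 1) om 1).const_mul _).const_mul x⁻¹).const_mul (pw i))]
        refine Finset.sum_congr rfl fun i hi => ?_
        obtain ⟨h1, h2⟩ := hmem i hi
        rw [intervalIntegral.integral_const_mul, intervalIntegral.integral_const_mul,
          intervalIntegral.integral_const_mul, keyBe1 i h1 h2]
      · rw [hmax2 w hw, Finset.mul_sum]
        refine Finset.sum_congr rfl fun i hi => ?_
        obtain ⟨h1, h2⟩ := hmem i hi
        have e : w / x * (pw i * Dn (i - 1) (J - i - 1) w)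
            = pw i * (x⁻¹ * (w * Dn (i - 1) (J - i - 1) w)) := by
          field_simp
        rw [e, key1 i h1 h2]
    rw [IL, IR, ← Finset.sum_add_distrib, Finset.mul_sum, Finset.mul_sum]
    refine Finset.sum_congr rfl fun i hi => ?_
    ring
  · -- part (ii)
    rw [I2, Finset.mul_sum, Finset.mul_sum]
    refine Finset.sum_congr rfl fun i hi => ?_
    ring
end
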